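/- Let k be a field, let R and S be polynomial rings over k in at least one variable each, with graded maximal ideals m and n, let I ⊆ m² and J ⊆ n² be proper homogeneous ideals, let T = R ⊗_k S, and let F = I + J + mn ⊆ T. If min{depth(R/I), depth(S/J)} = 0, then for every integer s ≥ 1 the symbolic and ordinary powers of F coincide: F^{(s)} = F^s. -/

import Mathlib

/- STATEMENT 11: k a field, R and S polynomial rings over k in at least one variable each
with graded maximal ideals m and n, I ⊆ m² and J ⊆ n² proper homogeneous ideals,
T = R ⊗_k S, F = I + J + mn. If min{depth(R/I), depth(S/J)} = 0 (equivalently m ∈ Ass(R/I)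
or n ∈ Ass(S/J)), then for every s ≥ 1: F^{(s)} = F^s. -/

open MvPolynomial

noncomputable section

/-- The graded maximal ideal of a polynomial ring, generated by the variables. -/
def mxI (k : Type*) [Field k] (σ : Type*) : Ideal (MvPolynomial σ k) :=
  Ideal.span (Set.range MvPolynomial.X)

/-- An ideal of a polynomial ring is homogeneous if it contains every homogeneous
component of each of its elements. -/
def IsHomogIdeal {k : Type*} [Field k] {σ : Type*} (I : Ideal (MvPolynomial σ k)) : Prop :=
  ∀ f ∈ I, ∀ d : ℕ, MvPolynomial.homogeneousComponent d f ∈ I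

/-- The `s`-th symbolic power of an ideal `a`: the intersection over all associated primes `P`
of `A ⧸ a` of the contraction of `a ^ s` extended to the localization at `P`. -/
def symbPow {A : Type*} [CommRing A] (a : Ideal A) (s : ℕ) : Ideal A :=
  sInf { J : Ideal A | ∃ (P : Ideal A) (hP : P ∈ associatedPrimes A (A ⧸ a)),
      haveI : P.IsPrime := IsAssociatedPrime.isPrime hP
      J = (Ideal.map (algebraMap A (Localization.AtPrime P)) (a ^ s)).comap
            (algebraMap A (Localization.AtPrime P)) }

section Aux

attribute [local instance] MvPolynomial.gradedAlgebra

variable {k : Type*} [Field k] {σ : Type*}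

lemma mem_mxI_iff (f : MvPolynomial σ k) : f ∈ mxI k σ ↔ coeff 0 f = 0 := by
  rw [mxI, ← Set.image_univ, mem_ideal_span_X_image]
  constructor
  · intro h
    by_contra hc
    obtain ⟨i, -, hi⟩ := h 0 (mem_support_iff.mpr hc)
    simp at hi
  · intro h m hm
    rcases eq_or_ne m 0 with rfl | hne
    · exact absurd h (mem_support_iff.mp hm)
    · obtain ⟨i, hi⟩ := Finsupp.ne_iff.mp hne
      exact ⟨i, Set.mem_univ i, by simpa using hi⟩

lemma Finsupp.degree_add' (u v : σ →₀ ℕ) : (u + v).degree = u.degree + v.degree := by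
  simp only [Finsupp.degree_eq_weight_one]
  exact map_add _ u v

lemma coeff_eq_zero_of_mem_mxI_pow :
    ∀ (t : ℕ) (g : MvPolynomial σ k), g ∈ mxI k σ ^ t →
      ∀ m : σ →₀ ℕ, m.degree < t → coeff m g = 0 := by
  classical
  intro t
  induction t with
  | zero => exact fun g _ m hm => absurd hm (Nat.not_lt_zero _)
  | succ t ih =>
    intro g hg
    rw [pow_succ] at hg
    refine Submodule.mul_induction_on hg ?_ ?_
    · intro p hp q hq m hm
      rw [coeff_mul]
      refine Finset.sum_eq_zero ?_
      rintro ⟨u, v⟩ huv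
      have hm' : u + v = m := Finset.HasAntidiagonal.mem_antidiagonal.mp huv
      by_cases h : u.degree < t
      · rw [ih p hp u h, zero_mul]
      · have hdeg : m.degree = u.degree + v.degree := by rw [← hm', Finsupp.degree_add']
        have hv : v = 0 := (Finsupp.degree_eq_zero_iff v).mp (by omega)
        rw [hv, (mem_mxI_iff q).mp hq, mul_zero]
    · intro p q hp hq m hm
      rw [coeff_add, hp m hm, hq m hm, add_zero]

lemma homogeneousComponent_eq_zero_of_mem_mxI_pow {t d : ℕ} {g : MvPolynomial σ k}
    (hg : g ∈ mxI k σ ^ t) (hd : d < t) : homogeneousComponent d g = 0 := by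
  ext m
  rw [coeff_homogeneousComponent, coeff_zero]
  split_ifs with h
  · exact coeff_eq_zero_of_mem_mxI_pow t g hg m (h ▸ hd)
  · rfl

lemma mem_of_mul_mem_homog {Q : Ideal (MvPolynomial σ k)} (hQ : IsHomogIdeal Q)
    {u x : MvPolynomial σ k} (hu : coeff 0 u ≠ 0) (h : u * x ∈ Q) : x ∈ Q := by
  set c := coeff 0 u with hc
  have key : ∀ t : ℕ, ∃ g ∈ mxI k σ ^ t, (C c) ^ t * x - g * x ∈ Q := by
    intro t
    induction t with
    | zero => exact ⟨1, by simp, by simp⟩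
    | succ t ih =>
      obtain ⟨g, hg, hq⟩ := ih
      refine ⟨g * (C c - u), ?_, ?_⟩
      · rw [pow_succ]
        refine Ideal.mul_mem_mul hg ((mem_mxI_iff _).mpr ?_)
        simp [hc]
      · have heq : (C c) ^ (t + 1) * x - g * (C c - u) * x
            = C c * ((C c) ^ t * x - g * x) + g * (u * x) := by ring
        rw [heq]
        exact Ideal.add_mem _ (Ideal.mul_mem_left _ _ hq) (Ideal.mul_mem_left _ _ h)
  have hcomp : ∀ d : ℕ, homogeneousComponent d x ∈ Q := by
    intro d
    obtain ⟨g, hg, hq⟩ := key (d + 1)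
    have h1 := hQ _ hq d
    rw [map_sub] at h1
    have h2 : homogeneousComponent d (g * x) = 0 :=
      homogeneousComponent_eq_zero_of_mem_mxI_pow (Ideal.mul_mem_right x _ hg)
        (Nat.lt_succ_self d)
    rw [h2, sub_zero, ← map_pow, homogeneousComponent_C_mul] at h1
    have h3 := Ideal.mul_mem_left Q (C ((c ^ (d + 1))⁻¹)) h1
    rwa [← mul_assoc, ← map_mul, inv_mul_cancel₀ (pow_ne_zero _ hu), map_one, one_mul] at h3
  have h4 := Ideal.sum_mem Q (fun i (_ : i ∈ Finset.range (x.totalDegree + 1)) => hcomp i)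
  rwa [sum_homogeneousComponent] at h4

lemma decompose_coe (f : MvPolynomial σ k) (i : ℕ) :
    (DirectSum.decompose (homogeneousSubmodule σ k) f i : MvPolynomial σ k) =
      homogeneousComponent i f :=
  MvPolynomial.decomposition.decompose'_apply f i

lemma isHomogIdeal_iff (Q : Ideal (MvPolynomial σ k)) :
    IsHomogIdeal Q ↔ Q.IsHomogeneous (homogeneousSubmodule σ k) := by
  constructor
  · intro h i r hr
    rw [decompose_coe]
    exact h r hr i
  · intro h f hf d
    have := h d hf
    rwa [decompose_coe] at this

lemma mxI_isHomogeneous : (mxI k σ).IsHomogeneous (homogeneousSubmodule σ k) := by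
  apply Ideal.homogeneous_span
  rintro x ⟨i, rfl⟩
  exact ⟨1, (mem_homogeneousSubmodule _ _).mpr (isHomogeneous_X k i)⟩

lemma map_rename_isHomogeneous {τ : Type*} (f : σ → τ) {Q : Ideal (MvPolynomial σ k)}
    (h : Q.IsHomogeneous (homogeneousSubmodule σ k)) :
    (Ideal.map (rename f : MvPolynomial σ k →ₐ[k] MvPolynomial τ k) Q).IsHomogeneous
      (homogeneousSubmodule τ k) := by
  rw [Ideal.IsHomogeneous.iff_exists] at h
  obtain ⟨S, rfl⟩ := h
  rw [Ideal.map_span]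
  apply Ideal.homogeneous_span
  rintro x ⟨y, ⟨⟨z, i, hz⟩, -, rfl⟩, rfl⟩
  exact ⟨i, (mem_homogeneousSubmodule _ _).mpr
    (((mem_homogeneousSubmodule _ _).mp hz).rename_isHomogeneous)⟩

lemma isHomogeneous_pow {Q : Ideal (MvPolynomial σ k)}
    (h : Q.IsHomogeneous (homogeneousSubmodule σ k)) (s : ℕ) :
    (Q ^ s).IsHomogeneous (homogeneousSubmodule σ k) := by
  induction s with
  | zero => simpa [Ideal.one_eq_top] using Ideal.IsHomogeneous.top (homogeneousSubmodule σ k)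
  | succ t ih => rw [pow_succ]; exact ih.mul h

lemma mxI_isMaximal : (mxI k σ).IsMaximal := by
  have hker : RingHom.ker (constantCoeff : MvPolynomial σ k →+* k) = mxI k σ := by
    ext f
    rw [RingHom.mem_ker, mem_mxI_iff]
    rfl
  rw [← hker]
  exact RingHom.ker_isMaximal_of_surjective _ fun c => ⟨C c, constantCoeff_C _ c⟩

end Aux

section Assoc

variable {k : Type*} [Field k]

lemma mxI_mem_assoc_left {σ₁ σ₂ : Type*} [Nonempty σ₁] [Finite σ₁]
    (I : Ideal (MvPolynomial σ₁ k)) (hIm : I ≤ mxI k σ₁ ^ 2)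
    (J : Ideal (MvPolynomial σ₂ k)) (hJn : J ≤ mxI k σ₂ ^ 2)
    (hI : mxI k σ₁ ∈ associatedPrimes (MvPolynomial σ₁ k) (MvPolynomial σ₁ k ⧸ I))
    (F : Ideal (MvPolynomial (σ₁ ⊕ σ₂) k))
    (hF : F = Ideal.map (rename (Sum.inl : σ₁ → σ₁ ⊕ σ₂) :
        MvPolynomial σ₁ k →ₐ[k] MvPolynomial (σ₁ ⊕ σ₂) k) I
      + Ideal.map (rename (Sum.inr : σ₂ → σ₁ ⊕ σ₂) :
        MvPolynomial σ₂ k →ₐ[k] MvPolynomial (σ₁ ⊕ σ₂) k) J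
      + Ideal.map (rename (Sum.inl : σ₁ → σ₁ ⊕ σ₂) :
        MvPolynomial σ₁ k →ₐ[k] MvPolynomial (σ₁ ⊕ σ₂) k) (mxI k σ₁)
        * Ideal.map (rename (Sum.inr : σ₂ → σ₁ ⊕ σ₂) :
        MvPolynomial σ₂ k →ₐ[k] MvPolynomial (σ₁ ⊕ σ₂) k) (mxI k σ₂)) :
    mxI k (σ₁ ⊕ σ₂) ∈
      associatedPrimes (MvPolynomial (σ₁ ⊕ σ₂) k) (MvPolynomial (σ₁ ⊕ σ₂) k ⧸ F) := by
  obtain ⟨hprime, y, hy⟩ := isAssociatedPrime_iff.mp hI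
  obtain ⟨x, rfl⟩ := Submodule.Quotient.mk_surjective _ y
  have hxI : ∀ r : MvPolynomial σ₁ k, r ∈ mxI k σ₁ ↔ r * x ∈ I := by
    intro r
    rw [hy, Submodule.mem_colon_singleton, Submodule.mem_bot, ← Submodule.Quotient.mk_smul,
      Submodule.Quotient.mk_eq_zero, smul_eq_mul]
  have hx0 : coeff 0 x = 0 := by
    obtain ⟨i⟩ := ‹Nonempty σ₁›
    have hXx : X i * x ∈ I := (hxI (X i)).mp (Ideal.subset_span ⟨i, rfl⟩)
    have h2 := coeff_X_mul (0 : σ₁ →₀ ℕ) i x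
    rw [add_zero] at h2
    rw [← h2]
    refine coeff_eq_zero_of_mem_mxI_pow 2 _ (hIm hXx) _ ?_
    have : (Finsupp.single i 1 : σ₁ →₀ ℕ).degree = 1 := by
      exact Finsupp.degree_single i 1
    omega
  have hxm : x ∈ mxI k σ₁ := (mem_mxI_iff x).mpr hx0
  have hxnI : x ∉ I := by
    intro hxi
    have h1 : (1 : MvPolynomial σ₁ k) ∈ mxI k σ₁ := (hxI 1).mpr (by simpa using hxi)
    have := (mem_mxI_iff _).mp h1
    simp at this
  set z : MvPolynomial (σ₁ ⊕ σ₂) k := rename Sum.inl x with hz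
  have hMz : mxI k (σ₁ ⊕ σ₂) ≤ F.colon (Ideal.span {z}) := by
    rw [mxI, Ideal.span_le]
    rintro _ ⟨j, rfl⟩
    rw [SetLike.mem_coe, Submodule.mem_colon_span_singleton, smul_eq_mul]
    cases j with
    | inl i =>
      have hXx : X i * x ∈ I := (hxI (X i)).mp (Ideal.subset_span ⟨i, rfl⟩)
      have h4 : X (Sum.inl i : σ₁ ⊕ σ₂) * z =
          (rename (Sum.inl : σ₁ → σ₁ ⊕ σ₂) : MvPolynomial σ₁ k →ₐ[k] _) (X i * x) := by
        rw [map_mul, rename_X]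
      rw [h4, hF]
      exact Submodule.mem_sup_left (Submodule.mem_sup_left (Ideal.mem_map_of_mem _ hXx))
    | inr j =>
      have h5 : X (Sum.inr j : σ₁ ⊕ σ₂) * z = z * X (Sum.inr j) := mul_comm _ _
      rw [h5, hF]
      refine Submodule.mem_sup_right (Ideal.mul_mem_mul (Ideal.mem_map_of_mem _ hxm) ?_)
      have : (X (Sum.inr j) : MvPolynomial (σ₁ ⊕ σ₂) k) =
          (rename (Sum.inr : σ₂ → σ₁ ⊕ σ₂) : MvPolynomial σ₂ k →ₐ[k] _) (X j) := by
        rw [rename_X]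
      rw [this]
      exact Ideal.mem_map_of_mem _ (Ideal.subset_span ⟨j, rfl⟩)
  have hzF : z ∉ F := by
    intro hzF
    set ψ : MvPolynomial (σ₁ ⊕ σ₂) k →ₐ[k] MvPolynomial σ₁ k :=
      aeval (Sum.elim X fun _ => 0) with hψ
    have hn'ker : Ideal.map (rename (Sum.inr : σ₂ → σ₁ ⊕ σ₂) :
        MvPolynomial σ₂ k →ₐ[k] MvPolynomial (σ₁ ⊕ σ₂) k) (mxI k σ₂) ≤ Ideal.comap ψ I := by
      rw [Ideal.map_le_iff_le_comap]
      intro q hq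
      have hq0 : coeff 0 q = 0 := (mem_mxI_iff q).mp hq
      simp only [Ideal.mem_comap, hψ]
      rw [aeval_rename]
      rw [show (Sum.elim X (fun _ => (0 : MvPolynomial σ₁ k)) ∘ Sum.inr)
        = (fun (_ : σ₂) => (0 : MvPolynomial σ₁ k)) from rfl, aeval_zero']
      rw [show constantCoeff q = coeff 0 q from rfl, hq0, map_zero]
      exact Ideal.zero_mem I
    have hcomap : F ≤ Ideal.comap ψ I := by
      rw [hF]
      refine sup_le (sup_le ?_ ?_) ?_
      · rw [Ideal.map_le_iff_le_comap]
        intro p hp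
        simp only [Ideal.mem_comap, hψ]
        rw [aeval_rename, Sum.elim_comp_inl, aeval_X_left_apply]
        exact hp
      · refine le_trans (Ideal.map_mono (le_trans hJn (Ideal.pow_le_self two_ne_zero))) hn'ker
      · exact le_trans Ideal.mul_le_right hn'ker
    have : ψ z ∈ I := hcomap hzF
    rw [hz] at this
    have hψz : ψ (rename (Sum.inl : σ₁ → σ₁ ⊕ σ₂) x) = x := by
      rw [hψ, aeval_rename, Sum.elim_comp_inl, aeval_X_left_apply]
    rw [hψz] at this
    exact hxnI this
  have hMax : (mxI k (σ₁ ⊕ σ₂)).IsMaximal := mxI_isMaximal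
  refine ⟨hMax.isPrime, Submodule.Quotient.mk z, ?_⟩
  have hle : mxI k (σ₁ ⊕ σ₂) ≤
      (Submodule.span _ {Submodule.Quotient.mk z
        (p := F)}).annihilator := by
    intro r hr
    rw [Submodule.mem_annihilator_span_singleton, ← Submodule.Quotient.mk_smul,
      Submodule.Quotient.mk_eq_zero]
    have := hMz hr
    rwa [Submodule.mem_colon_span_singleton] at this
  have hne : (Submodule.span (MvPolynomial (σ₁ ⊕ σ₂) k) {Submodule.Quotient.mk z (p := F)}).annihilator ≠ ⊤ := by
    intro htop
    have h1 : (1 : MvPolynomial (σ₁ ⊕ σ₂) k) ∈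
        (Submodule.span (MvPolynomial (σ₁ ⊕ σ₂) k)
          {Submodule.Quotient.mk z (p := F)}).annihilator :=
      htop ▸ Submodule.mem_top
    rw [Submodule.mem_annihilator_span_singleton, one_smul,
      Submodule.Quotient.mk_eq_zero] at h1
    exact hzF h1
  have hEq := hMax.eq_of_le hne hle
  have hc : (⊥ : Submodule (MvPolynomial (σ₁ ⊕ σ₂) k) (MvPolynomial (σ₁ ⊕ σ₂) k ⧸ F)).colon
      {Submodule.Quotient.mk z} = mxI k (σ₁ ⊕ σ₂) := by
    ext r
    rw [Submodule.mem_colon_singleton, Submodule.mem_bot,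
      ← Submodule.mem_annihilator_span_singleton, ← hEq]
  rw [hc, hMax.isPrime.radical]

lemma mxI_mem_assoc_right {σ₁ σ₂ : Type*} [Nonempty σ₂] [Finite σ₂]
    (I : Ideal (MvPolynomial σ₁ k)) (hIm : I ≤ mxI k σ₁ ^ 2)
    (J : Ideal (MvPolynomial σ₂ k)) (hJn : J ≤ mxI k σ₂ ^ 2)
    (hJ : mxI k σ₂ ∈ associatedPrimes (MvPolynomial σ₂ k) (MvPolynomial σ₂ k ⧸ J))
    (F : Ideal (MvPolynomial (σ₁ ⊕ σ₂) k))
    (hF : F = Ideal.map (rename (Sum.inl : σ₁ → σ₁ ⊕ σ₂) :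
        MvPolynomial σ₁ k →ₐ[k] MvPolynomial (σ₁ ⊕ σ₂) k) I
      + Ideal.map (rename (Sum.inr : σ₂ → σ₁ ⊕ σ₂) :
        MvPolynomial σ₂ k →ₐ[k] MvPolynomial (σ₁ ⊕ σ₂) k) J
      + Ideal.map (rename (Sum.inl : σ₁ → σ₁ ⊕ σ₂) :
        MvPolynomial σ₁ k →ₐ[k] MvPolynomial (σ₁ ⊕ σ₂) k) (mxI k σ₁)
        * Ideal.map (rename (Sum.inr : σ₂ → σ₁ ⊕ σ₂) :
        MvPolynomial σ₂ k →ₐ[k] MvPolynomial (σ₁ ⊕ σ₂) k) (mxI k σ₂)) :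
    mxI k (σ₁ ⊕ σ₂) ∈
      associatedPrimes (MvPolynomial (σ₁ ⊕ σ₂) k) (MvPolynomial (σ₁ ⊕ σ₂) k ⧸ F) := by
  obtain ⟨hprime, y, hy⟩ := isAssociatedPrime_iff.mp hJ
  obtain ⟨x, rfl⟩ := Submodule.Quotient.mk_surjective _ y
  have hxJ : ∀ r : MvPolynomial σ₂ k, r ∈ mxI k σ₂ ↔ r * x ∈ J := by
    intro r
    rw [hy, Submodule.mem_colon_singleton, Submodule.mem_bot, ← Submodule.Quotient.mk_smul,
      Submodule.Quotient.mk_eq_zero, smul_eq_mul]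
  have hx0 : coeff 0 x = 0 := by
    obtain ⟨i⟩ := ‹Nonempty σ₂›
    have hXx : X i * x ∈ J := (hxJ (X i)).mp (Ideal.subset_span ⟨i, rfl⟩)
    have h2 := coeff_X_mul (0 : σ₂ →₀ ℕ) i x
    rw [add_zero] at h2
    rw [← h2]
    refine coeff_eq_zero_of_mem_mxI_pow 2 _ (hJn hXx) _ ?_
    have : (Finsupp.single i 1 : σ₂ →₀ ℕ).degree = 1 := by
      exact Finsupp.degree_single i 1
    omega
  have hxm : x ∈ mxI k σ₂ := (mem_mxI_iff x).mpr hx0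
  have hxnJ : x ∉ J := by
    intro hxi
    have h1 : (1 : MvPolynomial σ₂ k) ∈ mxI k σ₂ := (hxJ 1).mpr (by simpa using hxi)
    have := (mem_mxI_iff _).mp h1
    simp at this
  set z : MvPolynomial (σ₁ ⊕ σ₂) k := rename Sum.inr x with hz
  have hMz : mxI k (σ₁ ⊕ σ₂) ≤ F.colon (Ideal.span {z}) := by
    rw [mxI, Ideal.span_le]
    rintro _ ⟨j, rfl⟩
    rw [SetLike.mem_coe, Submodule.mem_colon_span_singleton, smul_eq_mul]
    cases j with
    | inr i =>
      have hXx : X i * x ∈ J := (hxJ (X i)).mp (Ideal.subset_span ⟨i, rfl⟩)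
      have h4 : X (Sum.inr i : σ₁ ⊕ σ₂) * z =
          (rename (Sum.inr : σ₂ → σ₁ ⊕ σ₂) : MvPolynomial σ₂ k →ₐ[k] _) (X i * x) := by
        rw [map_mul, rename_X]
      rw [h4, hF]
      exact Submodule.mem_sup_left (Submodule.mem_sup_right (Ideal.mem_map_of_mem _ hXx))
    | inl j =>
      rw [hF]
      refine Submodule.mem_sup_right (Ideal.mul_mem_mul ?_ (Ideal.mem_map_of_mem _ hxm))
      have : (X (Sum.inl j) : MvPolynomial (σ₁ ⊕ σ₂) k) =
          (rename (Sum.inl : σ₁ → σ₁ ⊕ σ₂) : MvPolynomial σ₁ k →ₐ[k] _) (X j) := by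
        rw [rename_X]
      rw [this]
      exact Ideal.mem_map_of_mem _ (Ideal.subset_span ⟨j, rfl⟩)
  have hzF : z ∉ F := by
    intro hzF
    set ψ : MvPolynomial (σ₁ ⊕ σ₂) k →ₐ[k] MvPolynomial σ₂ k :=
      aeval (Sum.elim (fun _ => 0) X) with hψ
    have hm'ker : Ideal.map (rename (Sum.inl : σ₁ → σ₁ ⊕ σ₂) :
        MvPolynomial σ₁ k →ₐ[k] MvPolynomial (σ₁ ⊕ σ₂) k) (mxI k σ₁) ≤ Ideal.comap ψ J := by
      rw [Ideal.map_le_iff_le_comap]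
      intro q hq
      have hq0 : coeff 0 q = 0 := (mem_mxI_iff q).mp hq
      simp only [Ideal.mem_comap, hψ]
      rw [aeval_rename]
      rw [show (Sum.elim (fun _ => (0 : MvPolynomial σ₂ k)) X ∘ Sum.inl)
        = (fun (_ : σ₁) => (0 : MvPolynomial σ₂ k)) from rfl, aeval_zero']
      rw [show constantCoeff q = coeff 0 q from rfl, hq0, map_zero]
      exact Ideal.zero_mem J
    have hcomap : F ≤ Ideal.comap ψ J := by
      rw [hF]
      refine sup_le (sup_le ?_ ?_) ?_
      · refine le_trans (Ideal.map_mono (le_trans hIm (Ideal.pow_le_self two_ne_zero))) hm'ker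
      · rw [Ideal.map_le_iff_le_comap]
        intro p hp
        simp only [Ideal.mem_comap, hψ]
        rw [aeval_rename, Sum.elim_comp_inr, aeval_X_left_apply]
        exact hp
      · exact le_trans Ideal.mul_le_left hm'ker
    have : ψ z ∈ J := hcomap hzF
    rw [hz] at this
    have hψz : ψ (rename (Sum.inr : σ₂ → σ₁ ⊕ σ₂) x) = x := by
      rw [hψ, aeval_rename, Sum.elim_comp_inr, aeval_X_left_apply]
    rw [hψz] at this
    exact hxnJ this
  have hMax : (mxI k (σ₁ ⊕ σ₂)).IsMaximal := mxI_isMaximal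
  refine ⟨hMax.isPrime, Submodule.Quotient.mk z, ?_⟩
  have hle : mxI k (σ₁ ⊕ σ₂) ≤
      (Submodule.span _ {Submodule.Quotient.mk z
        (p := F)}).annihilator := by
    intro r hr
    rw [Submodule.mem_annihilator_span_singleton, ← Submodule.Quotient.mk_smul,
      Submodule.Quotient.mk_eq_zero]
    have := hMz hr
    rwa [Submodule.mem_colon_span_singleton] at this
  have hne : (Submodule.span (MvPolynomial (σ₁ ⊕ σ₂) k)
      {Submodule.Quotient.mk z (p := F)}).annihilator ≠ ⊤ := by
    intro htop
    have h1 : (1 : MvPolynomial (σ₁ ⊕ σ₂) k) ∈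
        (Submodule.span (MvPolynomial (σ₁ ⊕ σ₂) k)
          {Submodule.Quotient.mk z (p := F)}).annihilator :=
      htop ▸ Submodule.mem_top
    rw [Submodule.mem_annihilator_span_singleton, one_smul,
      Submodule.Quotient.mk_eq_zero] at h1
    exact hzF h1
  have hEq := hMax.eq_of_le hne hle
  have hc : (⊥ : Submodule (MvPolynomial (σ₁ ⊕ σ₂) k) (MvPolynomial (σ₁ ⊕ σ₂) k ⧸ F)).colon
      {Submodule.Quotient.mk z} = mxI k (σ₁ ⊕ σ₂) := by
    ext r
    rw [Submodule.mem_colon_singleton, Submodule.mem_bot,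
      ← Submodule.mem_annihilator_span_singleton, ← hEq]
  rw [hc, hMax.isPrime.radical]

end Assoc

attribute [local instance] MvPolynomial.gradedAlgebra

theorem symbPow_fiberProduct_eq_pow_of_depth_zero
    (k : Type*) [Field k] (a b : ℕ) (ha : 0 < a) (hb : 0 < b)
    (I : Ideal (MvPolynomial (Fin a) k)) (hIm : I ≤ mxI k (Fin a) ^ 2)
    (hIproper : I ≠ ⊤) (hIhom : IsHomogIdeal I)
    (J : Ideal (MvPolynomial (Fin b) k)) (hJn : J ≤ mxI k (Fin b) ^ 2)
    (hJproper : J ≠ ⊤) (hJhom : IsHomogIdeal J)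
    -- `min{depth(R/I), depth(S/J)} = 0`, equivalently one of the graded maximal ideals is
    -- an associated prime of the corresponding quotient
    (hdepth : mxI k (Fin a) ∈
        associatedPrimes (MvPolynomial (Fin a) k) (MvPolynomial (Fin a) k ⧸ I) ∨
      mxI k (Fin b) ∈
        associatedPrimes (MvPolynomial (Fin b) k) (MvPolynomial (Fin b) k ⧸ J))
    (I' J' m' n' : Ideal (MvPolynomial (Fin a ⊕ Fin b) k))
    (hI' : I' = Ideal.map (rename (Sum.inl : Fin a → Fin a ⊕ Fin b) :
      MvPolynomial (Fin a) k →ₐ[k] MvPolynomial (Fin a ⊕ Fin b) k) I)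
    (hJ' : J' = Ideal.map (rename (Sum.inr : Fin b → Fin a ⊕ Fin b) :
      MvPolynomial (Fin b) k →ₐ[k] MvPolynomial (Fin a ⊕ Fin b) k) J)
    (hm' : m' = Ideal.map (rename (Sum.inl : Fin a → Fin a ⊕ Fin b) :
      MvPolynomial (Fin a) k →ₐ[k] MvPolynomial (Fin a ⊕ Fin b) k) (mxI k (Fin a)))
    (hn' : n' = Ideal.map (rename (Sum.inr : Fin b → Fin a ⊕ Fin b) :
      MvPolynomial (Fin b) k →ₐ[k] MvPolynomial (Fin a ⊕ Fin b) k) (mxI k (Fin b)))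
    (F : Ideal (MvPolynomial (Fin a ⊕ Fin b) k)) (hF : F = I' + J' + m' * n')
    (s : ℕ) (hs : 1 ≤ s) :
    symbPow F s = F ^ s := by
  subst hI' hJ' hm' hn'
  haveI : Nonempty (Fin a) := ⟨⟨0, ha⟩⟩
  haveI : Nonempty (Fin b) := ⟨⟨0, hb⟩⟩
  have hM : mxI k (Fin a ⊕ Fin b) ∈ associatedPrimes (MvPolynomial (Fin a ⊕ Fin b) k)
      (MvPolynomial (Fin a ⊕ Fin b) k ⧸ F) := by
    rcases hdepth with h | h
    · exact mxI_mem_assoc_left I hIm J hJn h F hF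
    · exact mxI_mem_assoc_right I hIm J hJn h F hF
  haveI hMp : (mxI k (Fin a ⊕ Fin b)).IsPrime := hM.isPrime
  have hFhom : IsHomogIdeal (F ^ s) := by
    rw [isHomogIdeal_iff]
    refine isHomogeneous_pow ?_ s
    rw [hF]
    refine Ideal.IsHomogeneous.sup (Ideal.IsHomogeneous.sup ?_ ?_)
      (Ideal.IsHomogeneous.mul ?_ ?_)
    · exact map_rename_isHomogeneous _ ((isHomogIdeal_iff I).mp hIhom)
    · exact map_rename_isHomogeneous _ ((isHomogIdeal_iff J).mp hJhom)
    · exact map_rename_isHomogeneous _ mxI_isHomogeneous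
    · exact map_rename_isHomogeneous _ mxI_isHomogeneous
  apply le_antisymm
  · refine le_trans (sInf_le ⟨mxI k (Fin a ⊕ Fin b), hM, rfl⟩) ?_
    intro x hx
    rw [Ideal.mem_comap, IsLocalization.mem_map_algebraMap_iff
      (mxI k (Fin a ⊕ Fin b)).primeCompl] at hx
    obtain ⟨⟨⟨i, hi⟩, u⟩, hxu⟩ := hx
    rw [← map_mul] at hxu
    have heq : x * ↑u = ↑i :=
      IsLocalization.injective (Localization.AtPrime (mxI k (Fin a ⊕ Fin b)))
        (mxI k (Fin a ⊕ Fin b)).primeCompl_le_nonZeroDivisors hxu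
    have hu0 : coeff 0 (u : MvPolynomial (Fin a ⊕ Fin b) k) ≠ 0 := by
      intro h0
      exact u.2 ((mem_mxI_iff _).mpr h0)
    refine mem_of_mul_mem_homog hFhom hu0 ?_
    rw [mul_comm, heq]
    exact hi
  · refine le_sInf ?_
    rintro K ⟨P, hP, rfl⟩
    exact Ideal.le_comap_map


end
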